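/- Let A ∈ ℝ^{m×n}, b ∈ ℝ^m with Ax = b consistent, and let x* be the unique solution of Ax = b lying in Range(Aᵀ). Let S be a measurable random m×q real matrix on a probability space (Ω, 𝓕, P) such that ω ↦ S(ω)S(ω)ᵀ is Bochner integrable, H := E[SSᵀ] is positive definite, and there is λ > 0 with λ_max(Aᵀ S(ω) S(ω)ᵀ A) ≤ λ for P-almost every ω. Let ζ ∈ (0, 2), let x ∈ Range(Aᵀ), and for each ω define x⁺(ω) := x if S(ω)ᵀ(Ax − b) = 0, and otherwise x⁺(ω) := x − (2 − ζ)·L(ω)·AᵀS(ω)S(ω)ᵀ(Ax − b) where L(ω) := ‖S(ω)ᵀ(Ax − b)‖₂² / ‖AᵀS(ω)S(ω)ᵀ(Ax − b)‖₂². Then ∫ ‖x⁺(ω) − x*‖₂² dP(ω) ≤ (1 − ζ(2 − ζ)·σ²/λ)·‖x − x*‖₂², where σ² := inf{‖H^{1/2}Av‖₂² : v ∈ Range(Aᵀ), ‖v‖₂ = 1} is the square of the smallest nonzero singular value of H^{1/2}A. -/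

import Mathlib

open Matrix MeasureTheory
open scoped Classical

/-- The sketched residual `Sᵀ(Ax − b)`. -/
noncomputable def sres {m n q : ℕ} (A : Matrix (Fin m) (Fin n) ℝ) (b : Fin m → ℝ)
    (S : Matrix (Fin m) (Fin q) ℝ) (x : Fin n → ℝ) : Fin q → ℝ :=
  Sᵀ.mulVec (A.mulVec x - b)

/-- The stochastic gradient `∇f_S(x) = Aᵀ S Sᵀ (Ax − b)`. -/
noncomputable def sgrad {m n q : ℕ} (A : Matrix (Fin m) (Fin n) ℝ) (b : Fin m → ℝ)
    (S : Matrix (Fin m) (Fin q) ℝ) (x : Fin n → ℝ) : Fin n → ℝ :=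
  Aᵀ.mulVec (S.mulVec (Sᵀ.mulVec (A.mulVec x - b)))

/-- The square root of a positive semidefinite matrix, as `Matrix.PosSemidef.sqrt` was defined
in the older Mathlib (since removed). -/
noncomputable def Matrix.PosSemidef.sqrt {n : Type*} [Fintype n] [DecidableEq n] {𝕜 : Type*} [RCLike 𝕜]
    [PartialOrder 𝕜] {A : Matrix n n 𝕜} (hA : A.PosSemidef) : Matrix n n 𝕜 :=
  hA.1.eigenvectorUnitary.1 * diagonal ((↑) ∘ (√·) ∘ hA.1.eigenvalues) *
    (star hA.1.eigenvectorUnitary : Matrix n n 𝕜)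

lemma psd_sqrt_mul_self {a : ℕ} {H : Matrix (Fin a) (Fin a) ℝ} (hA : H.PosSemidef) :
    hA.sqrt * hA.sqrt = H := by
  have hu : (star hA.1.eigenvectorUnitary : Matrix (Fin a) (Fin a) ℝ) *
      hA.1.eigenvectorUnitary.1 = 1 := Unitary.coe_star_mul_self _
  conv_rhs => rw [hA.1.spectral_theorem, Unitary.conjStarAlgAut_apply]
  unfold Matrix.PosSemidef.sqrt
  set U := hA.1.eigenvectorUnitary
  calc U.1 * diagonal ((↑) ∘ (√·) ∘ hA.1.eigenvalues) * (star U : Matrix (Fin a) (Fin a) ℝ) *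
        (U.1 * diagonal ((↑) ∘ (√·) ∘ hA.1.eigenvalues) * (star U : Matrix (Fin a) (Fin a) ℝ))
      = U.1 * diagonal ((↑) ∘ (√·) ∘ hA.1.eigenvalues) * ((star U : Matrix (Fin a) (Fin a) ℝ) *
        U.1) * diagonal ((↑) ∘ (√·) ∘ hA.1.eigenvalues) * (star U : Matrix (Fin a) (Fin a) ℝ) := by
        simp only [mul_assoc]
    _ = _ := by
        rw [hu, mul_one, mul_assoc U.1, diagonal_mul_diagonal]
        congr 3
        funext i
        simp [Real.mul_self_sqrt (hA.eigenvalues_nonneg i)]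

lemma psd_sqrt_isHermitian {a : ℕ} {H : Matrix (Fin a) (Fin a) ℝ} (hA : H.PosSemidef) :
    hA.sqrt.IsHermitian := by
  unfold Matrix.PosSemidef.sqrt IsHermitian
  simp [Matrix.star_eq_conjTranspose, mul_assoc]

lemma dps_nonneg {a : ℕ} (u : Fin a → ℝ) : 0 ≤ u ⬝ᵥ u :=
  Finset.sum_nonneg fun i _ => mul_self_nonneg (u i)

lemma dps_pos {a : ℕ} {u : Fin a → ℝ} (h : u ≠ 0) : 0 < u ⬝ᵥ u := by
  rcases lt_or_eq_of_le (dps_nonneg u) with h' | h'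
  · exact h'
  · exact absurd ((dotProduct_self_eq_zero).1 h'.symm) h

lemma dot_trans {a b : ℕ} (M : Matrix (Fin a) (Fin b) ℝ) (u : Fin a → ℝ) (w : Fin b → ℝ) :
    Mᵀ.mulVec u ⬝ᵥ w = u ⬝ᵥ M.mulVec w := by
  rw [mulVec_transpose, ← dotProduct_mulVec]

lemma dotA {a b : ℕ} (M : Matrix (Fin a) (Fin b) ℝ) (u : Fin b → ℝ) (w : Fin a → ℝ) :
    M.mulVec u ⬝ᵥ w = u ⬝ᵥ Mᵀ.mulVec w := by
  have := dot_trans Mᵀ u w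
  simpa using this

lemma cs_sq {a : ℕ} (u w : Fin a → ℝ) : (u ⬝ᵥ w) ^ 2 ≤ (u ⬝ᵥ u) * (w ⬝ᵥ w) := by
  have := Finset.sum_mul_sq_le_sq_mul_sq Finset.univ u w
  simpa [dotProduct, pow_two] using this

lemma dot_mulVec_expand {a : ℕ} (u : Fin a → ℝ) (M : Matrix (Fin a) (Fin a) ℝ) :
    u ⬝ᵥ M.mulVec u = ∑ i, ∑ j, u i * u j * M i j := by
  simp only [dotProduct, mulVec, Finset.mul_sum]
  exact Finset.sum_congr rfl fun i _ => Finset.sum_congr rfl fun j _ => by ring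

/-- Theorem 3.1 (one-step convergence of the basic method, bounded sample space):
if `H = E[S Sᵀ]` is positive definite, `λ` almost surely bounds
`λ_max(Aᵀ S Sᵀ A)`, and `x⁺` is one step of the basic method with relaxation
parameter `ζ ∈ (0,2)` from `x ∈ Range(Aᵀ)`, then
`E[‖x⁺ − x*‖₂²] ≤ (1 − ζ(2−ζ)σ²/λ)‖x − x*‖₂²`, where `x*` is the solution of
`A x = b` in `Range(Aᵀ)` and `σ²` is the square of the smallest nonzero singular
value of `H^{1/2} A`. -/
theorem basic_method_expected_error_bound
    {m n q : ℕ} (A : Matrix (Fin m) (Fin n) ℝ) (b : Fin m → ℝ)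
    (xstar : Fin n → ℝ) (hxs : A.mulVec xstar = b) (hxs' : ∃ y, xstar = Aᵀ.mulVec y)
    {Ω : Type*} [MeasurableSpace Ω] (P : Measure Ω) [IsProbabilityMeasure P]
    (S : Ω → Matrix (Fin m) (Fin q) ℝ)
    (hSmeas : ∀ i j, Measurable fun ω => S ω i j)
    (hSint : ∀ i j, Integrable (fun ω => (S ω * (S ω)ᵀ) i j) P)
    (H : Matrix (Fin m) (Fin m) ℝ)
    (hH : ∀ i j, H i j = ∫ ω, (S ω * (S ω)ᵀ) i j ∂P)
    (hHpd : H.PosDef)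
    (lam : ℝ) (hlam : 0 < lam)
    (hlamb : ∀ᵐ ω ∂P, ∀ y : Fin n → ℝ,
      y ⬝ᵥ (Aᵀ * S ω * (S ω)ᵀ * A).mulVec y ≤ lam * (y ⬝ᵥ y))
    (ζ : ℝ) (hζ : ζ ∈ Set.Ioo (0 : ℝ) 2)
    (x : Fin n → ℝ) (hx : ∃ y, x = Aᵀ.mulVec y)
    (xplus : Ω → Fin n → ℝ)
    (hxplus : ∀ ω, xplus ω =
      if sres A b (S ω) x = 0 then x
      else x - ((2 - ζ) *
        ((sres A b (S ω) x ⬝ᵥ sres A b (S ω) x) /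
          (sgrad A b (S ω) x ⬝ᵥ sgrad A b (S ω) x))) • sgrad A b (S ω) x)
    (σ2 : ℝ)
    (hσ2 : σ2 = sInf {r : ℝ | ∃ v : Fin n → ℝ, (∃ y, v = Aᵀ.mulVec y) ∧ v ⬝ᵥ v = 1 ∧
      r = ((hHpd.posSemidef.sqrt * A).mulVec v) ⬝ᵥ ((hHpd.posSemidef.sqrt * A).mulVec v)}) :
    ∫ ω, (xplus ω - xstar) ⬝ᵥ (xplus ω - xstar) ∂P ≤
      (1 - ζ * (2 - ζ) * σ2 / lam) * ((x - xstar) ⬝ᵥ (x - xstar)) := by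
  obtain ⟨yx, hyx⟩ := hx
  obtain ⟨ys, hys⟩ := hxs'
  set e : Fin n → ℝ := x - xstar with he
  have hAe : A.mulVec x - b = A.mulVec e := by
    rw [he, mulVec_sub, hxs]
  have hζ1 : 0 < ζ := hζ.1
  have hζ2 : ζ < 2 := hζ.2
  set c0 : ℝ := ζ * (2 - ζ) / lam with hc0
  have hc0pos : 0 < c0 := div_pos (mul_pos hζ1 (by linarith)) hlam
  set F : Ω → ℝ := fun ω => sres A b (S ω) x ⬝ᵥ sres A b (S ω) x with hFdef
  -- pointwise a.e. bound
  have key : ∀ᵐ ω ∂P, (xplus ω - xstar) ⬝ᵥ (xplus ω - xstar) ≤ e ⬝ᵥ e - c0 * F ω := by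
    filter_upwards [hlamb] with ω hω
    simp only [hFdef]
    have hx1 := hxplus ω
    set r := sres A b (S ω) x with hrdef
    set g := sgrad A b (S ω) x with hgdef
    by_cases h0 : r = 0
    · rw [if_pos h0] at hx1
      rw [hx1, h0]
      simp [← he]
    · rw [if_neg h0] at hx1
      have hr : r = (S ω)ᵀ.mulVec (A.mulVec e) := by rw [hrdef, sres, hAe]
      have hg : g = Aᵀ.mulVec ((S ω).mulVec r) := by rw [hgdef, sgrad, hAe, ← hr]
      have hω' : ∀ y : Fin n → ℝ,
          ((S ω)ᵀ.mulVec (A.mulVec y)) ⬝ᵥ ((S ω)ᵀ.mulVec (A.mulVec y)) ≤ lam * (y ⬝ᵥ y) := by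
        intro y
        have h1 := hω y
        rw [← mulVec_mulVec, ← mulVec_mulVec, ← mulVec_mulVec, ← dotA A,
          ← dot_trans (S ω)] at h1
        exact h1
      have heg : e ⬝ᵥ g = r ⬝ᵥ r := by
        rw [hg, ← dotA A, ← dot_trans (S ω), ← hr]
      have hrr : 0 < r ⬝ᵥ r := dps_pos h0
      have hgne : g ≠ 0 := by
        intro hg0
        rw [hg0, dotProduct_zero] at heg
        linarith
      have hgg : 0 < g ⬝ᵥ g := dps_pos hgne
      have hgl : g ⬝ᵥ g ≤ lam * (r ⬝ᵥ r) := by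
        have h1 : g ⬝ᵥ g = r ⬝ᵥ ((S ω)ᵀ.mulVec (A.mulVec g)) := by
          rw [hg, dot_trans A, ← hg, dotA (S ω)]
        have h2 := cs_sq r ((S ω)ᵀ.mulVec (A.mulVec g))
        have h3 := hω' g
        nlinarith [hrr, hgg]
      rw [hx1]
      have hvec : x - ((2 - ζ) * (r ⬝ᵥ r / (g ⬝ᵥ g))) • g - xstar
          = e - ((2 - ζ) * (r ⬝ᵥ r / (g ⬝ᵥ g))) • g := by
        rw [he]; abel
      rw [hvec]
      set t : ℝ := (2 - ζ) * (r ⬝ᵥ r / (g ⬝ᵥ g)) with ht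
      have expand : (e - t • g) ⬝ᵥ (e - t • g)
          = e ⬝ᵥ e - 2 * t * (e ⬝ᵥ g) + t * t * (g ⬝ᵥ g) := by
        simp only [sub_dotProduct, dotProduct_sub, smul_dotProduct, dotProduct_smul,
          smul_eq_mul, dotProduct_comm g e]
        ring
      rw [expand, heg]
      have hval : e ⬝ᵥ e - 2 * t * (r ⬝ᵥ r) + t * t * (g ⬝ᵥ g)
          = e ⬝ᵥ e - ζ * (2 - ζ) * ((r ⬝ᵥ r) * (r ⬝ᵥ r) / (g ⬝ᵥ g)) := by
        rw [ht]
        field_simp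
        ring
      rw [hval]
      have hfin : c0 * (r ⬝ᵥ r) ≤ ζ * (2 - ζ) * ((r ⬝ᵥ r) * (r ⬝ᵥ r) / (g ⬝ᵥ g)) := by
        have h1 : c0 * (r ⬝ᵥ r) = ζ * (2 - ζ) * (r ⬝ᵥ r) / lam := by rw [hc0]; ring
        have h2 : ζ * (2 - ζ) * ((r ⬝ᵥ r) * (r ⬝ᵥ r) / (g ⬝ᵥ g))
            = ζ * (2 - ζ) * ((r ⬝ᵥ r) * (r ⬝ᵥ r)) / (g ⬝ᵥ g) := by ring
        rw [h1, h2, div_le_div_iff₀ hlam hgg]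
        nlinarith [mul_le_mul_of_nonneg_left hgl
          (le_of_lt (mul_pos (mul_pos hζ1 (by linarith : (0:ℝ) < 2 - ζ)) hrr))]
      linarith
  -- integrability and the value of the integral of F
  have hFform : ∀ ω, F ω = ∑ i, ∑ j,
      (A.mulVec e) i * (A.mulVec e) j * (S ω * (S ω)ᵀ) i j := by
    intro ω
    have h1 : sres A b (S ω) x = (S ω)ᵀ.mulVec (A.mulVec e) := by rw [sres, hAe]
    have h2 : F ω = (A.mulVec e) ⬝ᵥ (S ω * (S ω)ᵀ).mulVec (A.mulVec e) := by
      simp only [hFdef]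
      rw [h1, dot_trans, mulVec_mulVec]
    rw [h2, dot_mulVec_expand]
  have hFint : Integrable F P := by
    rw [funext hFform]
    apply integrable_finset_sum
    intro i _
    apply integrable_finset_sum
    intro j _
    exact (hSint i j).const_mul _
  have hFval : ∫ ω, F ω ∂P = (A.mulVec e) ⬝ᵥ H.mulVec (A.mulVec e) := by
    rw [funext hFform]
    rw [integral_finset_sum _ (fun i _ => integrable_finset_sum _
      (fun j _ => (hSint i j).const_mul _))]
    have : ∀ i, ∫ ω, ∑ j, (A.mulVec e) i * (A.mulVec e) j * (S ω * (S ω)ᵀ) i j ∂P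
        = ∑ j, (A.mulVec e) i * (A.mulVec e) j * H i j := by
      intro i
      rw [integral_finset_sum _ (fun j _ => (hSint i j).const_mul _)]
      refine Finset.sum_congr rfl fun j _ => ?_
      rw [hH i j, integral_const_mul]
    rw [Finset.sum_congr rfl fun i _ => this i, ← dot_mulVec_expand]
  -- σ² bound
  have hQ : σ2 * (e ⬝ᵥ e) ≤ (A.mulVec e) ⬝ᵥ H.mulVec (A.mulVec e) := by
    set B := hHpd.posSemidef.sqrt with hB
    have hBB : B * B = H := psd_sqrt_mul_self hHpd.posSemidef
    have hBt : Bᵀ = B := by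
      have h := psd_sqrt_isHermitian hHpd.posSemidef
      ext i j
      have h2 := congrFun (congrFun h i) j
      simpa using h2
    have hsq : ∀ w : Fin n → ℝ, (B * A).mulVec w ⬝ᵥ (B * A).mulVec w
        = (A.mulVec w) ⬝ᵥ H.mulVec (A.mulVec w) := by
      intro w
      rw [← mulVec_mulVec, dotA B, mulVec_mulVec, hBt, hBB]
    by_cases he0 : e = 0
    · simp [he0]
    · have hee : 0 < e ⬝ᵥ e := dps_pos he0
      set c : ℝ := (Real.sqrt (e ⬝ᵥ e))⁻¹ with hc
      have hcsq : c ^ 2 * (e ⬝ᵥ e) = 1 := by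
        rw [hc, inv_pow, Real.sq_sqrt hee.le, inv_mul_cancel₀ (ne_of_gt hee)]
      set v : Fin n → ℝ := c • e with hv
      have hv1 : v ⬝ᵥ v = 1 := by
        have : v ⬝ᵥ v = c ^ 2 * (e ⬝ᵥ e) := by
          simp only [hv, smul_dotProduct, dotProduct_smul, smul_eq_mul]
          ring
        rw [this, hcsq]
      have hvr : ∃ y, v = Aᵀ.mulVec y := by
        refine ⟨c • (yx - ys), ?_⟩
        rw [hv, he, hyx, hys, ← mulVec_sub, mulVec_smul]
      have hbdd : BddBelow {r : ℝ | ∃ v : Fin n → ℝ, (∃ y, v = Aᵀ.mulVec y) ∧ v ⬝ᵥ v = 1 ∧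
          r = ((hHpd.posSemidef.sqrt * A).mulVec v) ⬝ᵥ ((hHpd.posSemidef.sqrt * A).mulVec v)} := by
        refine ⟨0, fun rr hrr => ?_⟩
        obtain ⟨w, _, _, rfl⟩ := hrr
        exact dps_nonneg _
      have hmem : ((B * A).mulVec v) ⬝ᵥ ((B * A).mulVec v) ∈
          {r : ℝ | ∃ v : Fin n → ℝ, (∃ y, v = Aᵀ.mulVec y) ∧ v ⬝ᵥ v = 1 ∧
          r = ((hHpd.posSemidef.sqrt * A).mulVec v) ⬝ᵥ ((hHpd.posSemidef.sqrt * A).mulVec v)} :=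
        ⟨v, hvr, hv1, rfl⟩
      have hle : σ2 ≤ ((B * A).mulVec v) ⬝ᵥ ((B * A).mulVec v) := by
        rw [hσ2]; exact csInf_le hbdd hmem
      have hval3 : ((B * A).mulVec v) ⬝ᵥ ((B * A).mulVec v)
          = c ^ 2 * (((B * A).mulVec e) ⬝ᵥ ((B * A).mulVec e)) := by
        simp only [hv, mulVec_smul, smul_dotProduct, dotProduct_smul, smul_eq_mul]
        ring
      have hQ' : 0 ≤ ((B * A).mulVec e) ⬝ᵥ ((B * A).mulVec e) := dps_nonneg _
      calc σ2 * (e ⬝ᵥ e)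
          ≤ (c ^ 2 * (((B * A).mulVec e) ⬝ᵥ ((B * A).mulVec e))) * (e ⬝ᵥ e) :=
            mul_le_mul_of_nonneg_right (hval3 ▸ hle) hee.le
        _ = (((B * A).mulVec e) ⬝ᵥ ((B * A).mulVec e)) * (c ^ 2 * (e ⬝ᵥ e)) := by ring
        _ = ((B * A).mulVec e) ⬝ᵥ ((B * A).mulVec e) := by rw [hcsq, mul_one]
        _ = (A.mulVec e) ⬝ᵥ H.mulVec (A.mulVec e) := hsq e
  -- assemble
  calc ∫ ω, (xplus ω - xstar) ⬝ᵥ (xplus ω - xstar) ∂P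
      ≤ ∫ ω, (e ⬝ᵥ e - c0 * F ω) ∂P := by
        refine integral_mono_of_nonneg (Filter.Eventually.of_forall fun ω => dps_nonneg _)
          ((integrable_const _).sub (hFint.const_mul c0)) key
    _ = e ⬝ᵥ e - c0 * ((A.mulVec e) ⬝ᵥ H.mulVec (A.mulVec e)) := by
        rw [integral_sub (integrable_const _) (hFint.const_mul c0), integral_const,
          integral_const_mul, hFval]
        simp
    _ ≤ e ⬝ᵥ e - c0 * (σ2 * (e ⬝ᵥ e)) := by
        have := mul_le_mul_of_nonneg_left hQ hc0pos.le
        linarith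
    _ = (1 - ζ * (2 - ζ) * σ2 / lam) * (e ⬝ᵥ e) := by
        rw [hc0]; ring
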